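/- Let V be an n-dimensional vector space over a discretely valued field K with valuation ring R. Suppose V = (C∩D) ⊕ C' ⊕ D' with dim C' = dim D' = p, and A, B ⊆ C' ⊕ D' are p-dimensional subspaces with A∩(C'⊕D'∩C) = A∩D = B∩C = B∩D = 0 where C = (C∩D)⊕C' and D = (C∩D)⊕D'. Let L_A, L_B be full-rank lattices in A, B with p_{C'}(L_B) = α·p_{C'}(L_A) and p_{D'}(L_B) = β·p_{D'}(L_A) for scalars α, β ∈ K^×. Then the intersection number v( det(f_j(a_i)) det(g_j(b_i)) / (det(f_j(b_i)) det(g_j(a_i))) ) equals p·v(α/β), where a_i, b_i are bases of L_A, L_B, f_j a basis of (V/C)*, and g_j a basis of (V/D)*. -/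

import Mathlib

open Matrix Pointwise

section aux

variable {R : Type*} [CommRing R] [IsDomain R]
    {K : Type*} [Field K] [Algebra R K] [IsFractionRing R K]
    {V : Type*} [AddCommGroup V] [Module K V] [Module R V] [IsScalarTower R K V]
    [SMulCommClass K R V]

set_option linter.unusedSectionVars false in
lemma lattice_det {p : ℕ} (π : V →ₗ[K] V) (A : Submodule K V)
    (hπA : ∀ x ∈ A, π x = 0 → x = 0)
    (L_A L_B : Submodule R V) (γ : Kˣ)
    (hγ : Submodule.map (π.restrictScalars R) L_B
        = (γ : K) • Submodule.map (π.restrictScalars R) L_A)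
    (a b : Fin p → V) (haInd : LinearIndependent K a) (haA : ∀ i, a i ∈ A)
    (haSpan : Submodule.span R (Set.range a) = L_A)
    (hbSpan : Submodule.span R (Set.range b) = L_B) :
    ∃ M : Matrix (Fin p) (Fin p) R, IsUnit M.det ∧
      ∀ i, π (b i) = (γ : K) • ∑ k, M i k • π (a k) := by
  classical
  have hspanA : Submodule.span K (Set.range a) ≤ A :=
    Submodule.span_le.mpr (by rintro x ⟨i, rfl⟩; exact haA i)
  have hπa : LinearIndependent K (fun i => π (a i)) := by
    have hd : Disjoint (Submodule.span K (Set.range a)) (LinearMap.ker π) :=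
      Submodule.disjoint_def.mpr fun x hx hk => hπA x (hspanA hx) (LinearMap.mem_ker.mp hk)
    exact haInd.map hd
  have hbm : ∀ i, π (b i) ∈ Submodule.map (π.restrictScalars R) L_B := fun i =>
    ⟨b i, hbSpan ▸ Submodule.subset_span (Set.mem_range_self i), rfl⟩
  have ham : ∀ k, π (a k) ∈ Submodule.map (π.restrictScalars R) L_A := fun k =>
    ⟨a k, haSpan ▸ Submodule.subset_span (Set.mem_range_self k), rfl⟩
  have step1 : ∀ i, ∃ c : Fin p → R, π (b i) = (γ : K) • ∑ k, c k • π (a k) := by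
    intro i
    have h1 := hbm i
    rw [hγ, ← SetLike.mem_coe, Submodule.coe_pointwise_smul] at h1
    obtain ⟨y, hy, hyx⟩ := Set.mem_smul_set.mp h1
    obtain ⟨z, hz, rfl⟩ := hy
    rw [← haSpan] at hz
    obtain ⟨c, hc⟩ := (Submodule.mem_span_range_iff_exists_fun R).mp hz
    refine ⟨c, ?_⟩
    rw [← hyx, ← hc]
    simp [map_sum, LinearMap.map_smul_of_tower]
  choose M hM using step1
  have step2 : ∀ k, ∃ d : Fin p → R, (γ : K) • π (a k) = ∑ i, d i • π (b i) := by
    intro k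
    have h1 : (γ : K) • π (a k) ∈ (γ : K) • Submodule.map (π.restrictScalars R) L_A :=
      Submodule.smul_mem_pointwise_smul _ _ _ (ham k)
    rw [← hγ] at h1
    obtain ⟨z, hz, hz2⟩ := h1
    rw [← hbSpan] at hz
    obtain ⟨d, hd⟩ := (Submodule.mem_span_range_iff_exists_fun R).mp hz
    refine ⟨d, ?_⟩
    rw [← hz2, ← hd]
    simp [map_sum, LinearMap.map_smul_of_tower]
  choose N hN using step2
  have key : Matrix.of N * Matrix.of M = 1 := by
    ext k l
    have h1 : (γ : K) • π (a k)
        = (γ : K) • ∑ l, (∑ i, N k i * M i l) • π (a l) := by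
      rw [hN k]
      have : ∀ i, N k i • π (b i) = (γ : K) • ∑ l, (N k i * M i l) • π (a l) := by
        intro i
        rw [hM i, smul_comm, Finset.smul_sum]
        congr 1
        exact Finset.sum_congr rfl fun l _ => smul_smul _ _ _
      rw [Finset.sum_congr rfl fun i _ => this i, ← Finset.smul_sum]
      congr 1
      rw [Finset.sum_comm]
      exact Finset.sum_congr rfl fun l _ => (Finset.sum_smul).symm
    have h2 : π (a k) = ∑ l, (∑ i, N k i * M i l) • π (a l) := by
      have h1' := congrArg (fun x : V => (γ⁻¹ : K) • x) h1
      simpa [smul_smul, inv_mul_cancel₀ (Units.ne_zero γ)] using h1'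
    have h3 : ∀ l, algebraMap R K (∑ i, N k i * M i l) - (if k = l then 1 else 0) = 0 := by
      have := Fintype.linearIndependent_iff.mp hπa
        (fun l => algebraMap R K (∑ i, N k i * M i l) - (if k = l then 1 else 0)) ?_
      · exact this
      · have : (∑ l, (algebraMap R K (∑ i, N k i * M i l)
            - (if k = l then 1 else 0)) • π (a l)) =
            (∑ l, (∑ i, N k i * M i l) • π (a l)) - π (a k) := by
          simp only [sub_smul, Finset.sum_sub_distrib, algebraMap_smul, ite_smul, one_smul,
            zero_smul, Finset.sum_ite_eq, Finset.mem_univ, if_true]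
        rw [this, ← h2, sub_self]
    have h4 := h3 l
    rw [sub_eq_zero] at h4
    have h5 : algebraMap R K ((Matrix.of N * Matrix.of M) k l)
        = algebraMap R K ((1 : Matrix (Fin p) (Fin p) R) k l) := by
      rw [Matrix.mul_apply, Matrix.one_apply]
      simp only [Matrix.of_apply]
      rw [h4]
      split <;> simp
    exact IsFractionRing.injective R K h5
  exact ⟨Matrix.of M, Matrix.isUnit_det_of_left_inverse key, hM⟩

end aux

open Module Submodule in
lemma det_nonzero {K V : Type*} [Field K] [AddCommGroup V] [Module K V] [FiniteDimensional K V]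
    {p q n : ℕ} (hp : 0 < p) (hn : n = finrank K V) (hpq : n = p + q)
    (W A : Submodule K V) (hW : finrank K W = q) (hAW : A ⊓ W = ⊥)
    (a : Fin p → V) (haInd : LinearIndependent K a) (haA : ∀ i, a i ∈ A)
    (f : Fin p → Module.Dual K V) (hf : ∀ j, f j ∈ W.dualAnnihilator)
    (hfInd : LinearIndependent K f) :
    (Matrix.of fun i j => f j (a i)).det ≠ 0 := by
  classical
  haveI : Nonempty (Fin p) := ⟨⟨0, hp⟩⟩
  have evalker : ∀ x : V, (∀ j, f j x = 0) →
      ∀ φ ∈ Submodule.span K (Set.range f), φ x = 0 := by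
    intro x hx φ hφ
    have hle : Submodule.span K (Set.range f) ≤ LinearMap.ker (Module.Dual.eval K V x) :=
      Submodule.span_le.mpr (by rintro ψ ⟨j, rfl⟩; simp [LinearMap.mem_ker, hx j])
    simpa using hle hφ
  set E := (Submodule.span K (Set.range f)).dualCoannihilator with hE
  have hWE : W ≤ E := by
    intro x hx
    rw [Submodule.mem_dualCoannihilator]
    exact evalker x (fun j => (Submodule.mem_dualAnnihilator _).mp (hf j) x hx)
  have hspanf : finrank K (Submodule.span K (Set.range f)) = p := by
    rw [finrank_span_eq_card hfInd]; simp
  have hEdim : finrank K E = q := by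
    have h := Subspace.finrank_add_finrank_dualCoannihilator_eq (Submodule.span K (Set.range f))
    rw [hspanf, ← hn] at h
    rw [hE]
    omega
  have hEW : E = W :=
    (Submodule.eq_of_le_of_finrank_le hWE (by rw [hEdim, hW])).symm
  let F : V →ₗ[K] (Fin p → K) := LinearMap.pi f
  have hdisj : Disjoint (Submodule.span K (Set.range a)) (LinearMap.ker F) := by
    rw [Submodule.disjoint_def]
    intro x hx hker
    have hxA : x ∈ A := Submodule.span_le.mpr (by rintro y ⟨i, rfl⟩; exact haA i) hx
    have hfx : ∀ j, f j x = 0 := by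
      intro j
      have h0 : F x = 0 := LinearMap.mem_ker.mp hker
      have := congrFun h0 j
      simpa [F, LinearMap.pi_apply] using this
    have hxE : x ∈ E := (Submodule.mem_dualCoannihilator _).mpr (evalker x hfx)
    have : x ∈ A ⊓ W := ⟨hxA, hEW ▸ hxE⟩
    rw [hAW] at this
    exact this
  have hrows : LinearIndependent K (F ∘ a) := haInd.map hdisj
  have hcard : Fintype.card (Fin p) = finrank K (Fin p → K) := by
    simp [Module.finrank_fintype_fun_eq_card]
  let e := basisOfLinearIndependentOfCardEqFinrank hrows hcard
  have he : ⇑e = F ∘ a := coe_basisOfLinearIndependentOfCardEqFinrank hrows hcard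
  have : Invertible ((Pi.basisFun K (Fin p)).toMatrix ⇑e) :=
    (Pi.basisFun K (Fin p)).invertibleToMatrix e
  have hinv : IsUnit ((Pi.basisFun K (Fin p)).toMatrix ⇑e).det :=
    Matrix.isUnit_det_of_invertible _
  have hmat : (Matrix.of fun i j => f j (a i)) = ((Pi.basisFun K (Fin p)).toMatrix ⇑e)ᵀ := by
    ext i j
    simp [Basis.toMatrix_apply, he, F, LinearMap.pi_apply]
  rw [hmat, Matrix.det_transpose]
  exact hinv.ne_zero

/-- with `V = (C∩D) ⊕ C' ⊕ D'`, `A, B ⊆ C'⊕D'` of dimension `p`,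
lattices `L_A, L_B` with `p_{C'}(L_B) = α·p_{C'}(L_A)`, `p_{D'}(L_B) = β·p_{D'}(L_A)`,
the intersection number
`v( det(f_j(a_i))·det(g_j(b_i)) / (det(f_j(b_i))·det(g_j(a_i))) )` equals `p·v(α/β)`. -/
theorem stmt8 {R : Type*} [CommRing R] [IsDomain R] [IsDiscreteValuationRing R]
    {K : Type*} [Field K] [Algebra R K] [IsFractionRing R K]
    (v : K → ℤ) (hv : ∀ x y : K, x ≠ 0 → y ≠ 0 → v (x * y) = v x + v y)
    (hvR : ∀ u : Rˣ, v (algebraMap R K u) = 0)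
    {V : Type*} [AddCommGroup V] [Module K V] [Module R V] [IsScalarTower R K V]
    [SMulCommClass K R V] [FiniteDimensional K V]
    (n p q : ℕ) (hn : n = Module.finrank K V) (hpq : n = p + q) (hp : 1 ≤ p) (hq : p ≤ q)
    (C D C' D' A B : Submodule K V)
    (hC : Module.finrank K C = q) (hD : Module.finrank K D = q)
    (hA : Module.finrank K A = p) (hB : Module.finrank K B = p)
    (hCD : C ⊔ D = ⊤)
    -- `C'` is a complement of `C∩D` in `C`, `D'` a complement of `C∩D` in `D`
    (hC'1 : (C ⊓ D) ⊔ C' = C) (hC'2 : (C ⊓ D) ⊓ C' = ⊥)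
    (hD'1 : (C ⊓ D) ⊔ D' = D) (hD'2 : (C ⊓ D) ⊓ D' = ⊥)
    (hAC : A ⊓ C = ⊥) (hAD : A ⊓ D = ⊥) (hBC : B ⊓ C = ⊥) (hBD : B ⊓ D = ⊥)
    (hAsub : A ≤ C' ⊔ D') (hBsub : B ≤ C' ⊔ D')
    -- the projections onto `C'` and `D'` w.r.t. `V = (C∩D) ⊕ C' ⊕ D'`
    (pC' pD' : V →ₗ[K] V)
    (hpC'1 : ∀ x ∈ C', pC' x = x) (hpC'2 : ∀ x ∈ C ⊓ D, pC' x = 0)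
    (hpC'3 : ∀ x ∈ D', pC' x = 0)
    (hpD'1 : ∀ x ∈ D', pD' x = x) (hpD'2 : ∀ x ∈ C ⊓ D, pD' x = 0)
    (hpD'3 : ∀ x ∈ C', pD' x = 0)
    -- full-rank lattices `L_A ⊆ A` and `L_B ⊆ B`
    (L_A L_B : Submodule R V)
    (hLA : L_A ≤ A.restrictScalars R) (hLB : L_B ≤ B.restrictScalars R)
    (α β : Kˣ)
    (hα : Submodule.map (pC'.restrictScalars R) L_B = (α : K) • Submodule.map (pC'.restrictScalars R) L_A)
    (hβ : Submodule.map (pD'.restrictScalars R) L_B = (β : K) • Submodule.map (pD'.restrictScalars R) L_A)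
    -- `R`-bases of the lattices `L_A` and `L_B`
    (a b : Fin p → V)
    (haInd : LinearIndependent R a) (haSpan : Submodule.span R (Set.range a) = L_A)
    (hbInd : LinearIndependent R b) (hbSpan : Submodule.span R (Set.range b) = L_B)
    -- bases of `(V/C)* = Ann(C)` and `(V/D)* = Ann(D)`
    (f g : Fin p → Module.Dual K V)
    (hfC : ∀ j, f j ∈ C.dualAnnihilator) (hfInd : LinearIndependent K f)
    (hgD : ∀ j, g j ∈ D.dualAnnihilator) (hgInd : LinearIndependent K g) :
    v ((Matrix.of fun i j => f j (a i)).det * (Matrix.of fun i j => g j (b i)).det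
        / ((Matrix.of fun i j => f j (b i)).det * (Matrix.of fun i j => g j (a i)).det))
    = p * v ((α : K) / (β : K)) := by
  classical
  -- valuation arithmetic
  have hv1 : v 1 = 0 := by
    have := hv 1 1 one_ne_zero one_ne_zero
    rw [mul_one] at this; omega
  have hvinv : ∀ x : K, x ≠ 0 → v x⁻¹ = - v x := by
    intro x hx
    have := hv x x⁻¹ hx (inv_ne_zero hx)
    rw [mul_inv_cancel₀ hx, hv1] at this; omega
  have hvpow : ∀ (x : K), x ≠ 0 → ∀ m : ℕ, v (x ^ m) = m * v x := by
    intro x hx m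
    induction m with
    | zero => simpa using hv1
    | succ k ih =>
      rw [pow_succ, hv _ _ (pow_ne_zero k hx) hx, ih]; push_cast; ring
  -- geometry
  have hC'C : C' ≤ C := le_sup_right.trans hC'1.le
  have hD'D : D' ≤ D := le_sup_right.trans hD'1.le
  have haA : ∀ i, a i ∈ A := fun i =>
    hLA (haSpan ▸ Submodule.subset_span (Set.mem_range_self i))
  have hbB : ∀ i, b i ∈ B := fun i =>
    hLB (hbSpan ▸ Submodule.subset_span (Set.mem_range_self i))
  have haIndK : LinearIndependent K a := (LinearIndependent.iff_fractionRing R K).mp haInd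
  have hfpD : ∀ j, ∀ x ∈ C' ⊔ D', f j x = f j (pD' x) := by
    intro j x hx
    obtain ⟨c, hc, d, hd, rfl⟩ := Submodule.mem_sup.mp hx
    have h1 : pD' (c + d) = d := by rw [map_add, hpD'3 c hc, hpD'1 d hd, zero_add]
    rw [h1, map_add, (Submodule.mem_dualAnnihilator _).mp (hfC j) c (hC'C hc), zero_add]
  have hgpC : ∀ j, ∀ x ∈ C' ⊔ D', g j x = g j (pC' x) := by
    intro j x hx
    obtain ⟨c, hc, d, hd, rfl⟩ := Submodule.mem_sup.mp hx
    have h1 : pC' (c + d) = c := by rw [map_add, hpC'1 c hc, hpC'3 d hd, add_zero]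
    rw [h1, map_add, (Submodule.mem_dualAnnihilator _).mp (hgD j) d (hD'D hd), add_zero]
  have hinjD : ∀ x ∈ A, pD' x = 0 → x = 0 := by
    intro x hx h0
    obtain ⟨c, hc, d, hd, rfl⟩ := Submodule.mem_sup.mp (hAsub hx)
    have hdd : pD' (c + d) = d := by rw [map_add, hpD'3 c hc, hpD'1 d hd, zero_add]
    have hd0 : d = 0 := by rw [← hdd, h0]
    have hmem : c + d ∈ A ⊓ C := ⟨hx, by rw [hd0, add_zero]; exact hC'C hc⟩
    rw [hAC] at hmem
    exact hmem
  have hinjC : ∀ x ∈ A, pC' x = 0 → x = 0 := by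
    intro x hx h0
    obtain ⟨c, hc, d, hd, rfl⟩ := Submodule.mem_sup.mp (hAsub hx)
    have hcc : pC' (c + d) = c := by rw [map_add, hpC'1 c hc, hpC'3 d hd, add_zero]
    have hc0 : c = 0 := by rw [← hcc, h0]
    have hmem : c + d ∈ A ⊓ D := ⟨hx, by rw [hc0, zero_add]; exact hD'D hd⟩
    rw [hAD] at hmem
    exact hmem
  obtain ⟨M, hMdet, hM⟩ := lattice_det pD' A hinjD L_A L_B β hβ a b haIndK haA haSpan hbSpan
  obtain ⟨N, hNdet, hN⟩ := lattice_det pC' A hinjC L_A L_B α hα a b haIndK haA haSpan hbSpan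
  -- matrix identities
  have hFbeq : (Matrix.of fun i j => f j (b i))
      = (β : K) • (M.map (algebraMap R K) * (Matrix.of fun i j => f j (a i))) := by
    ext i j
    simp only [Matrix.smul_apply, Matrix.mul_apply, Matrix.map_apply, Matrix.of_apply,
      smul_eq_mul]
    rw [hfpD j _ (hBsub (hbB i)), hM i, LinearMap.map_smul, smul_eq_mul]
    congr 1
    rw [map_sum]
    exact Finset.sum_congr rfl fun k _ => by
      rw [LinearMap.map_smul_of_tower, Algebra.smul_def, ← hfpD j _ (hAsub (haA k))]
  have hGbeq : (Matrix.of fun i j => g j (b i))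
      = (α : K) • (N.map (algebraMap R K) * (Matrix.of fun i j => g j (a i))) := by
    ext i j
    simp only [Matrix.smul_apply, Matrix.mul_apply, Matrix.map_apply, Matrix.of_apply,
      smul_eq_mul]
    rw [hgpC j _ (hBsub (hbB i)), hN i, LinearMap.map_smul, smul_eq_mul]
    congr 1
    rw [map_sum]
    exact Finset.sum_congr rfl fun k _ => by
      rw [LinearMap.map_smul_of_tower, Algebra.smul_def, ← hgpC j _ (hAsub (haA k))]
  -- nonvanishing determinants
  have hFadet : (Matrix.of fun i j => f j (a i)).det ≠ 0 :=
    det_nonzero hp hn hpq C A hC hAC a haIndK haA f hfC hfInd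
  have hGadet : (Matrix.of fun i j => g j (a i)).det ≠ 0 :=
    det_nonzero hp hn hpq D A hD hAD a haIndK haA g hgD hgInd
  obtain ⟨uM, huM⟩ := hMdet
  obtain ⟨uN, huN⟩ := hNdet
  have huMK : algebraMap R K (uM : R) ≠ 0 := by
    simpa [IsFractionRing.to_map_eq_zero_iff] using uM.ne_zero
  have huNK : algebraMap R K (uN : R) ≠ 0 := by
    simpa [IsFractionRing.to_map_eq_zero_iff] using uN.ne_zero
  have hdetFb : (Matrix.of fun i j => f j (b i)).det
      = (β : K) ^ p * (algebraMap R K (uM : R) * (Matrix.of fun i j => f j (a i)).det) := by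
    rw [hFbeq, Matrix.det_smul, Matrix.det_mul, ← Matrix.det_transpose (M.map _)]
    rw [Matrix.det_transpose, ← RingHom.mapMatrix_apply, ← RingHom.map_det, huM]
    simp [Fintype.card_fin]
  have hdetGb : (Matrix.of fun i j => g j (b i)).det
      = (α : K) ^ p * (algebraMap R K (uN : R) * (Matrix.of fun i j => g j (a i)).det) := by
    rw [hGbeq, Matrix.det_smul, Matrix.det_mul, ← Matrix.det_transpose (N.map _)]
    rw [Matrix.det_transpose, ← RingHom.mapMatrix_apply, ← RingHom.map_det, huN]
    simp [Fintype.card_fin]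
  have hβp : (β : K) ^ p ≠ 0 := pow_ne_zero _ (Units.ne_zero β)
  have hαp : (α : K) ^ p ≠ 0 := pow_ne_zero _ (Units.ne_zero α)
  have hX : (Matrix.of fun i j => f j (a i)).det * (Matrix.of fun i j => g j (b i)).det
      / ((Matrix.of fun i j => f j (b i)).det * (Matrix.of fun i j => g j (a i)).det)
      = ((α : K) ^ p * algebraMap R K (uN : R)) / ((β : K) ^ p * algebraMap R K (uM : R)) := by
    rw [hdetFb, hdetGb]
    field_simp
  rw [hX]
  have h1 : (α : K) ^ p * algebraMap R K (uN : R) ≠ 0 := mul_ne_zero hαp huNK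
  have h2 : (β : K) ^ p * algebraMap R K (uM : R) ≠ 0 := mul_ne_zero hβp huMK
  rw [div_eq_mul_inv, hv _ _ h1 (inv_ne_zero h2), hvinv _ h2,
    hv _ _ hαp huNK, hv _ _ hβp huMK, hvpow _ (Units.ne_zero α) p, hvpow _ (Units.ne_zero β) p,
    hvR uN, hvR uM, div_eq_mul_inv, hv _ _ (Units.ne_zero α) (inv_ne_zero (Units.ne_zero β)),
    hvinv _ (Units.ne_zero β)]
  push_cast
  ring
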